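/- Let A* = G* ×₁ U₁* ×₂ U₂* and A = G ×₁ U₁ ×₂ U₂ be N×N×T₀ tensors with core tensors G*, G ∈ ℝ^{r₁×r₂×T₀} and factor matrices U_i*, U_i ∈ ℝ^{N×r_i}, where U_i*ᵀU_i* = b²I_{r_i}. Suppose ‖U_i‖_op ≤ (1+c_e)σ_U^{1/4} and ‖G_{(i)}‖_op ≤ (1+c_e)σ_U^{1/2} for i = 1, 2, with c_e > 0, b > 0, σ_U > 0. Then for any orthogonal matrices R_i ∈ ℝ^{r_i×r_i}: ‖G − G* ×₁ R₁ᵀ ×₂ R₂ᵀ‖_F² ≤ 3 b^{-4} ‖A − A*‖_F² + 3(1+c_e)⁴ σ_U^{3/2} b^{-4} Σ_{i=1}^{2} ‖U_i − U_i* R_i‖_F². -/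

import Mathlib

open Matrix

/-- Frobenius norm of a real matrix. -/
noncomputable def frob {m n : Type*} [Fintype m] [Fintype n] (M : Matrix m n ℝ) : ℝ :=
  Real.sqrt (∑ i, ∑ j, (M i j) ^ 2)

/-- Operator (spectral) norm of a real matrix, via its action between Euclidean spaces. -/
noncomputable def opNorm {m n : Type*} [Fintype m] [Fintype n] [DecidableEq m] [DecidableEq n]
    (A : Matrix m n ℝ) : ℝ :=
  ‖LinearMap.toContinuousLinearMap (Matrix.toEuclideanLin A)‖

/-- Mode-1 matricization of a third-order tensor given by its frontal slices. -/
def mat1 {r₁ r₂ T₀ : ℕ} (G : Fin T₀ → Matrix (Fin r₁) (Fin r₂) ℝ) :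
    Matrix (Fin r₁) (Fin T₀ × Fin r₂) ℝ :=
  fun i jk => G jk.1 i jk.2

/-- Mode-2 matricization of a third-order tensor given by its frontal slices. -/
def mat2 {r₁ r₂ T₀ : ℕ} (G : Fin T₀ → Matrix (Fin r₁) (Fin r₂) ℝ) :
    Matrix (Fin r₂) (Fin T₀ × Fin r₁) ℝ :=
  fun i jk => G jk.1 jk.2 i

namespace CoreAux

open scoped Matrix.Norms.L2Operator

set_option linter.unusedSectionVars false

noncomputable def frobSq {m n : Type*} [Fintype m] [Fintype n] (M : Matrix m n ℝ) : ℝ :=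
  ∑ i, ∑ j, (M i j) ^ 2

lemma frobSq_nonneg {m n : Type*} [Fintype m] [Fintype n] (M : Matrix m n ℝ) :
    0 ≤ frobSq M := by
  unfold frobSq; positivity

lemma frob_sq {m n : Type*} [Fintype m] [Fintype n] (M : Matrix m n ℝ) :
    frob M ^ 2 = frobSq M :=
  Real.sq_sqrt (by positivity)

lemma frobSq_transpose {m n : Type*} [Fintype m] [Fintype n] (M : Matrix m n ℝ) :
    frobSq Mᵀ = frobSq M := by
  unfold frobSq
  rw [Finset.sum_comm]
  rfl

lemma frobSq_eq_trace {m n : Type*} [Fintype m] [Fintype n] (M : Matrix m n ℝ) :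
    frobSq M = (Mᵀ * M).trace := by
  unfold frobSq
  rw [Finset.sum_comm]
  simp [Matrix.trace, Matrix.mul_apply, Matrix.diag, sq]

lemma opNorm_nonneg {m n : Type*} [Fintype m] [Fintype n] [DecidableEq m] [DecidableEq n]
    (A : Matrix m n ℝ) : 0 ≤ opNorm A := norm_nonneg _

lemma opNorm_transpose {m n : Type*} [Fintype m] [Fintype n] [DecidableEq m] [DecidableEq n]
    (A : Matrix m n ℝ) : opNorm Aᵀ = opNorm A := by
  show ‖Aᵀ‖ = ‖A‖
  rw [← Matrix.l2_opNorm_conjTranspose A]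
  congr 1

lemma mulVec_sq_le {m n : Type*} [Fintype m] [Fintype n] [DecidableEq m] [DecidableEq n]
    (A : Matrix m n ℝ) (v : n → ℝ) :
    ∑ i, (A.mulVec v i) ^ 2 ≤ opNorm A ^ 2 * ∑ j, (v j) ^ 2 := by
  have h := Matrix.l2_opNorm_mulVec A ((WithLp.equiv 2 (n → ℝ)).symm v)
  rw [EuclideanSpace.norm_eq, EuclideanSpace.norm_eq] at h
  have h1 : ∀ i, ‖(EuclideanSpace.equiv m ℝ).symm (A *ᵥ (WithLp.equiv 2 (n → ℝ)).symm v) i‖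
      = |A.mulVec v i| := fun i => rfl
  have h2 : ∀ j, ‖((WithLp.equiv 2 (n → ℝ)).symm v) j‖ = |v j| := fun j => rfl
  simp only [h1, h2, sq_abs] at h
  have hL : (0:ℝ) ≤ ∑ i, (A.mulVec v i) ^ 2 := by positivity
  have hR : (0:ℝ) ≤ ∑ j, (v j) ^ 2 := by positivity
  calc ∑ i, (A.mulVec v i) ^ 2
      = Real.sqrt (∑ i, (A.mulVec v i) ^ 2) ^ 2 := (Real.sq_sqrt hL).symm
    _ ≤ (‖A‖ * Real.sqrt (∑ j, (v j) ^ 2)) ^ 2 := by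
        apply pow_le_pow_left₀ (Real.sqrt_nonneg _) h
    _ = opNorm A ^ 2 * ∑ j, (v j) ^ 2 := by
        rw [mul_pow, Real.sq_sqrt hR]; rfl

variable {m n p : Type*} [Fintype m] [Fintype n] [Fintype p]
  [DecidableEq m] [DecidableEq n] [DecidableEq p]

lemma frobSq_mul_left (A : Matrix m n ℝ) (M : Matrix n p ℝ) :
    frobSq (A * M) ≤ opNorm A ^ 2 * frobSq M := by
  unfold frobSq
  calc ∑ i, ∑ j, ((A * M) i j) ^ 2 = ∑ j, ∑ i, ((A * M) i j) ^ 2 := Finset.sum_comm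
    _ ≤ ∑ j : p, opNorm A ^ 2 * ∑ l, (M l j) ^ 2 := by
        apply Finset.sum_le_sum
        intro c _
        have := mulVec_sq_le A (fun l => M l c)
        simpa [Matrix.mulVec, Matrix.mul_apply, dotProduct] using this
    _ = opNorm A ^ 2 * ∑ i, ∑ j, (M i j) ^ 2 := by
        rw [← Finset.mul_sum, Finset.sum_comm]

lemma frobSq_mul_right (M : Matrix m n ℝ) (H : Matrix n p ℝ) :
    frobSq (M * H) ≤ opNorm H ^ 2 * frobSq M := by
  calc frobSq (M * H) = frobSq ((M * H)ᵀ) := (frobSq_transpose _).symm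
    _ = frobSq (Hᵀ * Mᵀ) := by rw [Matrix.transpose_mul]
    _ ≤ opNorm Hᵀ ^ 2 * frobSq Mᵀ := frobSq_mul_left _ _
    _ = opNorm H ^ 2 * frobSq M := by rw [opNorm_transpose, frobSq_transpose]

lemma frobSq_coiso_left {r : Type*} [Fintype r] [DecidableEq r]
    (V : Matrix m r ℝ) (a : ℝ) (hV : Vᵀ * V = a • (1 : Matrix r r ℝ))
    (Y : Matrix r p ℝ) : frobSq (V * Y) = a * frobSq Y := by
  rw [frobSq_eq_trace, frobSq_eq_trace, Matrix.transpose_mul]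
  have h : Yᵀ * Vᵀ * (V * Y) = a • (Yᵀ * Y) := by
    rw [Matrix.mul_assoc, ← Matrix.mul_assoc Vᵀ V Y, hV, Matrix.smul_mul, Matrix.one_mul,
      Matrix.mul_smul]
  rw [h, Matrix.trace_smul, smul_eq_mul]

lemma frobSq_sandwich {r₁ r₂ : Type*} [Fintype r₁] [DecidableEq r₁] [Fintype r₂] [DecidableEq r₂]
    (V₁ : Matrix m r₁ ℝ) (V₂ : Matrix p r₂ ℝ) (a c : ℝ)
    (h1 : V₁ᵀ * V₁ = a • (1 : Matrix r₁ r₁ ℝ)) (h2 : V₂ᵀ * V₂ = c • (1 : Matrix r₂ r₂ ℝ))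
    (X : Matrix r₁ r₂ ℝ) :
    frobSq (V₁ * X * V₂ᵀ) = a * (c * frobSq X) := by
  rw [Matrix.mul_assoc, frobSq_coiso_left V₁ a h1, ← frobSq_transpose (X * V₂ᵀ),
    Matrix.transpose_mul, Matrix.transpose_transpose, frobSq_coiso_left V₂ c h2,
    frobSq_transpose]

lemma frobSq_three (X Y Z : Matrix m n ℝ) :
    frobSq (X - Y - Z) ≤ 3 * frobSq X + 3 * frobSq Y + 3 * frobSq Z := by
  unfold frobSq
  calc ∑ i, ∑ j, ((X - Y - Z) i j) ^ 2
      ≤ ∑ i, ∑ j, (3 * (X i j) ^ 2 + 3 * (Y i j) ^ 2 + 3 * (Z i j) ^ 2) := by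
        apply Finset.sum_le_sum
        intro i _
        apply Finset.sum_le_sum
        intro j _
        simp only [Matrix.sub_apply]
        nlinarith [sq_nonneg (X i j + Y i j), sq_nonneg (X i j + Z i j),
          sq_nonneg (Y i j - Z i j)]
    _ = 3 * ∑ i, ∑ j, (X i j) ^ 2 + 3 * ∑ i, ∑ j, (Y i j) ^ 2 + 3 * ∑ i, ∑ j, (Z i j) ^ 2 := by
        simp [Finset.sum_add_distrib, Finset.mul_sum]

lemma sum_frobSq_mat1 {N r₁ r₂ T₀ : ℕ} (M : Matrix (Fin N) (Fin r₁) ℝ)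
    (G : Fin T₀ → Matrix (Fin r₁) (Fin r₂) ℝ) :
    ∑ j, frobSq (M * G j) = frobSq (M * mat1 G) := by
  unfold frobSq
  have h : ∀ (i : Fin N) (jk : Fin T₀ × Fin r₂),
      (M * mat1 G) i jk = (M * G jk.1) i jk.2 := by
    intro i jk; simp [Matrix.mul_apply, mat1]
  simp only [h, Fintype.sum_prod_type]
  rw [Finset.sum_comm]

lemma sum_frobSq_mat2 {N r₁ r₂ T₀ : ℕ} (M : Matrix (Fin N) (Fin r₂) ℝ)
    (G : Fin T₀ → Matrix (Fin r₁) (Fin r₂) ℝ) :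
    ∑ j, frobSq (M * (G j)ᵀ) = frobSq (M * mat2 G) := by
  unfold frobSq
  have h : ∀ (i : Fin N) (jk : Fin T₀ × Fin r₁),
      (M * mat2 G) i jk = (M * (G jk.1)ᵀ) i jk.2 := by
    intro i jk; simp [Matrix.mul_apply, mat2, Matrix.transpose_apply]
  simp only [h, Fintype.sum_prod_type]
  rw [Finset.sum_comm]

end CoreAux

/-- Core-tensor error bound (Lemma B.8, eq. (B.29)): for Tucker tensors
`A = G ×₁ U₁ ×₂ U₂` and `A* = G* ×₁ U₁* ×₂ U₂*` (with frontal slices `U₁ G_j U₂ᵀ` and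
`U₁* G*_j U₂*ᵀ`), with `U_i*ᵀU_i* = b²I`, operator-norm bounds on `U_i` and on the
matricizations of `G`, and orthogonal rotations `R_i`:
`‖G − G* ×₁ R₁ᵀ ×₂ R₂ᵀ‖_F² ≤ 3b⁻⁴‖A − A*‖_F²
  + 3(1+c_e)⁴ σ_U^{3/2} b⁻⁴ Σᵢ ‖Uᵢ − Uᵢ* Rᵢ‖_F²`. -/
theorem core_error_bound {N r₁ r₂ T₀ : ℕ}
    (G Gstar : Fin T₀ → Matrix (Fin r₁) (Fin r₂) ℝ)
    (U₁ U₁s : Matrix (Fin N) (Fin r₁) ℝ) (U₂ U₂s : Matrix (Fin N) (Fin r₂) ℝ)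
    (R₁ : Matrix (Fin r₁) (Fin r₁) ℝ) (R₂ : Matrix (Fin r₂) (Fin r₂) ℝ)
    (b ce σU : ℝ) (hb : 0 < b) (hce : 0 < ce) (hσ : 0 < σU)
    (hU1s : U₁sᵀ * U₁s = (b ^ 2) • (1 : Matrix (Fin r₁) (Fin r₁) ℝ))
    (hU2s : U₂sᵀ * U₂s = (b ^ 2) • (1 : Matrix (Fin r₂) (Fin r₂) ℝ))
    (hR1 : R₁ᵀ * R₁ = 1) (hR2 : R₂ᵀ * R₂ = 1)
    (hU1 : opNorm U₁ ≤ (1 + ce) * σU ^ ((1 : ℝ) / 4))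
    (hU2 : opNorm U₂ ≤ (1 + ce) * σU ^ ((1 : ℝ) / 4))
    (hG1 : opNorm (mat1 G) ≤ (1 + ce) * σU ^ ((1 : ℝ) / 2))
    (hG2 : opNorm (mat2 G) ≤ (1 + ce) * σU ^ ((1 : ℝ) / 2))
    (hbσ : b ≤ (1 + ce) * σU ^ ((1 : ℝ) / 4)) :
    ∑ j, (frob (G j - R₁ᵀ * Gstar j * R₂)) ^ 2 ≤
      3 / b ^ 4 * ∑ j, (frob (U₁ * G j * U₂ᵀ - U₁s * Gstar j * U₂sᵀ)) ^ 2 +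
      3 * (1 + ce) ^ 4 * σU ^ ((3 : ℝ) / 2) / b ^ 4 *
        ((frob (U₁ - U₁s * R₁)) ^ 2 + (frob (U₂ - U₂s * R₂)) ^ 2) := by
  classical
  open CoreAux in
  simp only [frob_sq]
  -- notation
  set V₁ : Matrix (Fin N) (Fin r₁) ℝ := U₁s * R₁ with hV₁def
  set V₂ : Matrix (Fin N) (Fin r₂) ℝ := U₂s * R₂ with hV₂def
  have hR1' : R₁ * R₁ᵀ = 1 := mul_eq_one_comm.mp hR1
  have hR2' : R₂ * R₂ᵀ = 1 := mul_eq_one_comm.mp hR2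
  have hV1 : V₁ᵀ * V₁ = (b ^ 2) • (1 : Matrix (Fin r₁) (Fin r₁) ℝ) := by
    rw [hV₁def, Matrix.transpose_mul, Matrix.mul_assoc, ← Matrix.mul_assoc U₁sᵀ U₁s R₁, hU1s,
      Matrix.smul_mul, Matrix.one_mul, Matrix.mul_smul, hR1]
  have hV2 : V₂ᵀ * V₂ = (b ^ 2) • (1 : Matrix (Fin r₂) (Fin r₂) ℝ) := by
    rw [hV₂def, Matrix.transpose_mul, Matrix.mul_assoc, ← Matrix.mul_assoc U₂sᵀ U₂s R₂, hU2s,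
      Matrix.smul_mul, Matrix.one_mul, Matrix.mul_smul, hR2]
  set D : Fin T₀ → Matrix (Fin r₁) (Fin r₂) ℝ := fun j => G j - R₁ᵀ * Gstar j * R₂ with hDdef
  set W : Fin T₀ → Matrix (Fin N) (Fin N) ℝ :=
    fun j => U₁ * G j * U₂ᵀ - U₁s * Gstar j * U₂sᵀ with hWdef
  set Y : Fin T₀ → Matrix (Fin N) (Fin N) ℝ := fun j => (U₁ - V₁) * G j * U₂ᵀ with hYdef
  set Z : Fin T₀ → Matrix (Fin N) (Fin N) ℝ := fun j => V₁ * G j * (U₂ - V₂)ᵀ with hZdef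
  -- key algebraic identity
  have key : ∀ j, V₁ * D j * V₂ᵀ = W j - Y j - Z j := by
    intro j
    have hc : V₁ * (R₁ᵀ * Gstar j * R₂) * V₂ᵀ = U₁s * Gstar j * U₂sᵀ := by
      rw [hV₁def, hV₂def, Matrix.transpose_mul]
      simp only [Matrix.mul_assoc]
      rw [← Matrix.mul_assoc R₁ R₁ᵀ, hR1', Matrix.one_mul,
        ← Matrix.mul_assoc R₂ R₂ᵀ, hR2', Matrix.one_mul]
    have eD : D j = G j - R₁ᵀ * Gstar j * R₂ := rfl
    have eW : W j = U₁ * G j * U₂ᵀ - U₁s * Gstar j * U₂sᵀ := rfl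
    have eY : Y j = (U₁ - V₁) * G j * U₂ᵀ := rfl
    have eZ : Z j = V₁ * G j * (U₂ - V₂)ᵀ := rfl
    rw [eD, eW, eY, eZ]
    simp only [Matrix.mul_sub, Matrix.sub_mul, Matrix.transpose_sub]
    rw [hc]
    abel
  have hb4 : (0:ℝ) < b ^ 4 := by positivity
  -- per-slice bound
  have hj : ∀ j, frobSq (D j) ≤
      (b ^ 4)⁻¹ * (3 * frobSq (W j) + 3 * frobSq (Y j) + 3 * frobSq (Z j)) := by
    intro j
    have hsand := frobSq_sandwich V₁ V₂ (b ^ 2) (b ^ 2) hV1 hV2 (D j)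
    have h1 : b ^ 2 * (b ^ 2 * frobSq (D j)) ≤
        3 * frobSq (W j) + 3 * frobSq (Y j) + 3 * frobSq (Z j) := by
      rw [← hsand, key j]
      exact frobSq_three _ _ _
    have h2 := mul_le_mul_of_nonneg_left h1 (inv_nonneg.mpr hb4.le)
    calc frobSq (D j) = (b ^ 4)⁻¹ * (b ^ 2 * (b ^ 2 * frobSq (D j))) := by
          field_simp
      _ ≤ _ := h2
  -- constant
  have hrpow : (σU ^ ((1:ℝ)/4)) ^ 2 * (σU ^ ((1:ℝ)/2)) ^ 2 = σU ^ ((3:ℝ)/2) := by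
    rw [← Real.rpow_natCast (σU ^ ((1:ℝ)/4)) 2, ← Real.rpow_natCast (σU ^ ((1:ℝ)/2)) 2,
      ← Real.rpow_mul hσ.le, ← Real.rpow_mul hσ.le, ← Real.rpow_add hσ]
    norm_num
  have hσ4 : (0:ℝ) ≤ σU ^ ((1:ℝ)/4) := Real.rpow_nonneg hσ.le _
  have hσ2 : (0:ℝ) ≤ σU ^ ((1:ℝ)/2) := Real.rpow_nonneg hσ.le _
  have hce4 : (0:ℝ) ≤ (1 + ce) * σU ^ ((1:ℝ)/4) := by positivity
  have hce2 : (0:ℝ) ≤ (1 + ce) * σU ^ ((1:ℝ)/2) := by positivity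
  have hKval : ((1 + ce) * σU ^ ((1:ℝ)/4)) ^ 2 * ((1 + ce) * σU ^ ((1:ℝ)/2)) ^ 2
      = (1 + ce) ^ 4 * σU ^ ((3:ℝ)/2) := by
    rw [mul_pow, mul_pow]
    rw [show (1+ce)^2 * (σU ^ ((1:ℝ)/4))^2 * ((1+ce)^2 * (σU ^ ((1:ℝ)/2))^2)
      = (1+ce)^4 * ((σU ^ ((1:ℝ)/4))^2 * (σU ^ ((1:ℝ)/2))^2) from by ring, hrpow]
  set K : ℝ := (1 + ce) ^ 4 * σU ^ ((3:ℝ)/2) with hKdef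
  have hKnonneg : 0 ≤ K := by
    rw [hKdef]; positivity
  -- bound for Y
  have hYsum : ∑ j, frobSq (Y j) ≤ K * frobSq (U₁ - V₁) := by
    have step1 : ∀ j, frobSq (Y j) ≤ opNorm U₂ ^ 2 * frobSq ((U₁ - V₁) * G j) := by
      intro j
      calc frobSq (Y j) = frobSq ((Y j)ᵀ) := (frobSq_transpose _).symm
        _ = frobSq (U₂ * ((U₁ - V₁) * G j)ᵀ) := by
            rw [show (Y j)ᵀ = U₂ * ((U₁ - V₁) * G j)ᵀ from by
              rw [show Y j = (U₁ - V₁) * G j * U₂ᵀ from rfl, Matrix.transpose_mul,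
                Matrix.transpose_transpose]]
        _ ≤ opNorm U₂ ^ 2 * frobSq (((U₁ - V₁) * G j)ᵀ) := frobSq_mul_left _ _
        _ = opNorm U₂ ^ 2 * frobSq ((U₁ - V₁) * G j) := by rw [frobSq_transpose]
    calc ∑ j, frobSq (Y j) ≤ ∑ j, opNorm U₂ ^ 2 * frobSq ((U₁ - V₁) * G j) :=
          Finset.sum_le_sum (fun j _ => step1 j)
      _ = opNorm U₂ ^ 2 * frobSq ((U₁ - V₁) * mat1 G) := by
          rw [← Finset.mul_sum, sum_frobSq_mat1]
      _ ≤ opNorm U₂ ^ 2 * (opNorm (mat1 G) ^ 2 * frobSq (U₁ - V₁)) := by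
          exact mul_le_mul_of_nonneg_left (frobSq_mul_right _ _) (sq_nonneg _)
      _ ≤ ((1 + ce) * σU ^ ((1:ℝ)/4)) ^ 2 *
            (((1 + ce) * σU ^ ((1:ℝ)/2)) ^ 2 * frobSq (U₁ - V₁)) := by
          apply mul_le_mul
          · exact pow_le_pow_left₀ (opNorm_nonneg _) hU2 2
          · apply mul_le_mul_of_nonneg_right _ (frobSq_nonneg _)
            exact pow_le_pow_left₀ (opNorm_nonneg _) hG1 2
          · exact mul_nonneg (sq_nonneg _) (frobSq_nonneg _)
          · positivity
      _ = K * frobSq (U₁ - V₁) := by rw [← hKval]; ring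
  -- bound for Z
  have hZsum : ∑ j, frobSq (Z j) ≤ K * frobSq (U₂ - V₂) := by
    have step1 : ∀ j, frobSq (Z j) = b ^ 2 * frobSq ((U₂ - V₂) * (G j)ᵀ) := by
      intro j
      calc frobSq (Z j) = frobSq (V₁ * (G j * (U₂ - V₂)ᵀ)) := by
            rw [show Z j = V₁ * G j * (U₂ - V₂)ᵀ from rfl, Matrix.mul_assoc]
        _ = b ^ 2 * frobSq (G j * (U₂ - V₂)ᵀ) := frobSq_coiso_left V₁ (b ^ 2) hV1 _
        _ = b ^ 2 * frobSq ((U₂ - V₂) * (G j)ᵀ) := by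
            rw [← frobSq_transpose (G j * (U₂ - V₂)ᵀ), Matrix.transpose_mul,
              Matrix.transpose_transpose]
    calc ∑ j, frobSq (Z j) = b ^ 2 * frobSq ((U₂ - V₂) * mat2 G) := by
          simp only [step1]
          rw [← Finset.mul_sum, sum_frobSq_mat2]
      _ ≤ b ^ 2 * (opNorm (mat2 G) ^ 2 * frobSq (U₂ - V₂)) := by
          exact mul_le_mul_of_nonneg_left (frobSq_mul_right _ _) (sq_nonneg _)
      _ ≤ ((1 + ce) * σU ^ ((1:ℝ)/4)) ^ 2 *
            (((1 + ce) * σU ^ ((1:ℝ)/2)) ^ 2 * frobSq (U₂ - V₂)) := by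
          apply mul_le_mul
          · exact pow_le_pow_left₀ hb.le hbσ 2
          · apply mul_le_mul_of_nonneg_right _ (frobSq_nonneg _)
            exact pow_le_pow_left₀ (opNorm_nonneg _) hG2 2
          · exact mul_nonneg (sq_nonneg _) (frobSq_nonneg _)
          · positivity
      _ = K * frobSq (U₂ - V₂) := by rw [← hKval]; ring
  -- combine
  have hsum : ∑ j, frobSq (D j) ≤
      (b ^ 4)⁻¹ * (3 * ∑ j, frobSq (W j) + 3 * ∑ j, frobSq (Y j) + 3 * ∑ j, frobSq (Z j)) := by
    calc ∑ j, frobSq (D j)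
        ≤ ∑ j, (b ^ 4)⁻¹ * (3 * frobSq (W j) + 3 * frobSq (Y j) + 3 * frobSq (Z j)) :=
          Finset.sum_le_sum (fun j _ => hj j)
      _ = (b ^ 4)⁻¹ *
          (3 * ∑ j, frobSq (W j) + 3 * ∑ j, frobSq (Y j) + 3 * ∑ j, frobSq (Z j)) := by
          rw [← Finset.mul_sum]
          congr 1
          rw [Finset.sum_add_distrib, Finset.sum_add_distrib, ← Finset.mul_sum,
            ← Finset.mul_sum, ← Finset.mul_sum]
  calc ∑ j, frobSq (D j)
      ≤ (b ^ 4)⁻¹ *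
        (3 * ∑ j, frobSq (W j) + 3 * ∑ j, frobSq (Y j) + 3 * ∑ j, frobSq (Z j)) := hsum
    _ ≤ (b ^ 4)⁻¹ *
        (3 * ∑ j, frobSq (W j) + 3 * (K * frobSq (U₁ - V₁)) + 3 * (K * frobSq (U₂ - V₂))) := by
        apply mul_le_mul_of_nonneg_left _ (inv_nonneg.mpr hb4.le)
        have h3Y := mul_le_mul_of_nonneg_left hYsum (by norm_num : (0:ℝ) ≤ 3)
        have h3Z := mul_le_mul_of_nonneg_left hZsum (by norm_num : (0:ℝ) ≤ 3)
        linarith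
    _ = 3 / b ^ 4 * ∑ j, frobSq (W j) +
        3 * (1 + ce) ^ 4 * σU ^ ((3:ℝ)/2) / b ^ 4 *
          (frobSq (U₁ - V₁) + frobSq (U₂ - V₂)) := by
        rw [hKdef, div_eq_mul_inv, div_eq_mul_inv]
        ring
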